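/- If f : ℝ^d → ℝ is twice continuously differentiable and satisfies ‖∇f(y) - ∇f(x)‖ ≤ (L₀ + L₁‖∇f(x)‖)‖y - x‖ for all x, y with ‖y - x‖ ≤ 1/L₁, then for all such x, y: f(y) ≤ f(x) + ⟨∇f(x), y - x⟩ + (L₀ + L₁‖∇f(x)‖)/2 · ‖y - x‖² · e^{L₁‖y-x‖}. -/

import Mathlib

open RealInnerProductSpace

/-- If f is C² and satisfies the asymmetric (L₀,L₁)-smoothness gradient condition,
    then the corresponding descent-type upper bound with exponential factor holds. -/
theorem stmt_3 (d : ℕ) (L0 L1 : ℝ) (hL0 : 0 < L0) (hL1 : 0 < L1)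
    (f : EuclideanSpace ℝ (Fin d) → ℝ) (hf : ContDiff ℝ 2 f)
    (hsmooth : ∀ x y : EuclideanSpace ℝ (Fin d), ‖y - x‖ ≤ 1 / L1 →
      ‖gradient f y - gradient f x‖ ≤ (L0 + L1 * ‖gradient f x‖) * ‖y - x‖) :
    ∀ x y : EuclideanSpace ℝ (Fin d), ‖y - x‖ ≤ 1 / L1 →
      f y ≤ f x + ⟪gradient f x, y - x⟫ +
        (L0 + L1 * ‖gradient f x‖) / 2 * ‖y - x‖ ^ 2 * Real.exp (L1 * ‖y - x‖) := by
  intro x y hxy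
  set v := y - x with hv
  set g := gradient f x with hg
  set C := L0 + L1 * ‖g‖ with hC
  have hCpos : 0 < C := by positivity
  have hdiff : ∀ p, DifferentiableAt ℝ f p := fun p =>
    (hf.differentiable (by norm_num)).differentiableAt
  have hcontgrad : Continuous (fun p => gradient f p) := by
    have h1 : Continuous (fderiv ℝ f) := hf.continuous_fderiv (by norm_num)
    exact (InnerProductSpace.toDual ℝ _).symm.continuous.comp h1
  have key : ∀ t : ℝ, HasDerivAt (fun s => f (x + s • v)) ⟪gradient f (x + t • v), v⟫ t := by
    intro t
    have hp : HasDerivAt (fun s : ℝ => x + s • v) v t := by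
      simpa using ((hasDerivAt_id t).smul_const v).const_add x
    have hfd : HasFDerivAt f
        (InnerProductSpace.toDual ℝ _ (gradient f (x + t • v))) (x + t • v) :=
      (hdiff _).hasGradientAt
    exact (hfd.comp_hasDerivAt t hp).congr_deriv (by simp)
  have hcontint : Continuous (fun t : ℝ => ⟪gradient f (x + t • v), v⟫) := by
    apply Continuous.inner _ continuous_const
    exact hcontgrad.comp (by continuity)
  have hint : f y - f x = ∫ t in (0:ℝ)..1, ⟪gradient f (x + t • v), v⟫ := by
    have := intervalIntegral.integral_eq_sub_of_hasDerivAt (f := fun s => f (x + s • v))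
      (fun t _ => key t) (hcontint.intervalIntegrable 0 1)
    simpa [hv] using this.symm
  have hbound : ∀ t ∈ Set.Icc (0:ℝ) 1,
      ⟪gradient f (x + t • v), v⟫ ≤ ⟪g, v⟫ + C * ‖v‖ ^ 2 * t := by
    intro t ht
    have hnorm : ‖(x + t • v) - x‖ = t * ‖v‖ := by
      simp [norm_smul, abs_of_nonneg ht.1]
    have hle : ‖(x + t • v) - x‖ ≤ 1 / L1 := by
      rw [hnorm]
      calc t * ‖v‖ ≤ 1 * ‖v‖ := by
            apply mul_le_mul_of_nonneg_right ht.2 (norm_nonneg _)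
        _ ≤ 1 / L1 := by simpa using hxy
    have hsm := hsmooth x (x + t • v) hle
    rw [hnorm] at hsm
    have hinner : ⟪gradient f (x + t • v) - g, v⟫ ≤ C * ‖v‖ ^ 2 * t := by
      calc ⟪gradient f (x + t • v) - g, v⟫ ≤ ‖gradient f (x + t • v) - g‖ * ‖v‖ :=
            real_inner_le_norm _ _
        _ ≤ (C * (t * ‖v‖)) * ‖v‖ := by
            apply mul_le_mul_of_nonneg_right _ (norm_nonneg _)
            simpa [hg, hC] using hsm
        _ = C * ‖v‖ ^ 2 * t := by ring
    have := inner_sub_left (𝕜 := ℝ) (gradient f (x + t • v)) g v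
    linarith [hinner, this ▸ hinner]
  have hintle : (∫ t in (0:ℝ)..1, ⟪gradient f (x + t • v), v⟫)
      ≤ ∫ t in (0:ℝ)..1, (⟪g, v⟫ + C * ‖v‖ ^ 2 * t) := by
    apply intervalIntegral.integral_mono_on (by norm_num)
      (hcontint.intervalIntegrable 0 1)
      ((continuous_const.add (continuous_const.mul continuous_id)).intervalIntegrable 0 1)
    exact hbound
  have hcalc : (∫ t in (0:ℝ)..1, (⟪g, v⟫ + C * ‖v‖ ^ 2 * t)) = ⟪g, v⟫ + C * ‖v‖ ^ 2 / 2 := by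
    rw [intervalIntegral.integral_add (intervalIntegrable_const)
      ((intervalIntegrable_const).mul_continuousOn (by fun_prop))]
    rw [intervalIntegral.integral_const, intervalIntegral.integral_const_mul, integral_id]
    simp
    ring
  have hquad : f y ≤ f x + ⟪g, v⟫ + C * ‖v‖ ^ 2 / 2 := by
    have := hint ▸ hintle
    linarith [hint, hintle, hcalc.le, hcalc.ge]
  have hexp : (1:ℝ) ≤ Real.exp (L1 * ‖v‖) := Real.one_le_exp (by positivity)
  have hnn : 0 ≤ C / 2 * ‖v‖ ^ 2 := by positivity
  calc f y ≤ f x + ⟪g, v⟫ + C * ‖v‖ ^ 2 / 2 := hquad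
    _ ≤ f x + ⟪g, v⟫ + C / 2 * ‖v‖ ^ 2 * Real.exp (L1 * ‖v‖) := by nlinarith
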